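/- Let A₂ = ℤ² be the A₂ root lattice with simple roots α₁, α₂ satisfying B₂(α_j,α_k) = 2δ_{j,k} − δ_{j,k+1} − δ_{j+1,k}, fundamental weights β₁ = (2α₁+α₂)/3, β₂ = (α₁+2α₂)/3, and μ₂(s) := (s₁β₁+s₂β₂)/p for s ∈ ℤ² and p ∈ ℕ. Then A₂ + μ₂(s) = ⋃_{δ∈{0,1}} ( 3(ℤ + (2s₁+s₂+3pδ)/(6p)) β₁ + (ℤ + (s₂−pδ)/(2p)) α₂ ) = ⋃_{δ∈{0,1}} ( 3(ℤ + (2s₂+s₁+3pδ)/(6p)) β₂ + (ℤ + (s₁−pδ)/(2p)) α₁ ), and both unions are disjoint. Moreover, on the linear span of α₁ or of α₂, the quadratic form Q₂ restricts to the rank-one quadratic form Q₁(nα_j) = n². -/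

import Mathlib

noncomputable section

/-- The simple root `α₁` of `A₂` in the simple-root basis. -/
def a1 : Fin 2 → ℝ := ![1, 0]

/-- The simple root `α₂` of `A₂` in the simple-root basis. -/
def a2 : Fin 2 → ℝ := ![0, 1]

/-- The fundamental weight `β₁ = (2α₁+α₂)/3`. -/
def b1 : Fin 2 → ℝ := ![2/3, 1/3]

/-- The fundamental weight `β₂ = (α₁+2α₂)/3`. -/
def b2 : Fin 2 → ℝ := ![1/3, 2/3]

/-- The quadratic form `Q₂(n₁α₁+n₂α₂) = n₁² + n₂² − n₁n₂` of `A₂`. -/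
def Q2 (x : Fin 2 → ℝ) : ℝ := x 0 ^ 2 + x 1 ^ 2 - x 0 * x 1

/-- The shift `μ₂(s) = (s₁β₁ + s₂β₂)/p`. -/
def mu2 (p : ℕ) (s : Fin 2 → ℤ) : Fin 2 → ℝ :=
  fun i => ((s 0 : ℝ) * b1 i + (s 1 : ℝ) * b2 i) / p

/-- The shifted lattice `A₂ + μ₂(s)`. -/
def cosetA2 (p : ℕ) (s : Fin 2 → ℤ) : Set (Fin 2 → ℝ) :=
  {x | ∃ ν : Fin 2 → ℤ, x = (fun i => (ν i : ℝ)) + mu2 p s}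

/-- The piece `3(ℤ + (2s₁+s₂+3pδ)/(6p)) β₁ + (ℤ + (s₂−pδ)/(2p)) α₂`. -/
def pieceB1 (p : ℕ) (s : Fin 2 → ℤ) (δ : ℤ) : Set (Fin 2 → ℝ) :=
  {x | ∃ a b : ℤ,
    x = (3 * ((a : ℝ) + (2*(s 0 : ℝ) + (s 1 : ℝ) + 3*(p:ℝ)*(δ:ℝ)) / (6*(p:ℝ)))) • b1 +
        ((b : ℝ) + ((s 1 : ℝ) - (p:ℝ)*(δ:ℝ)) / (2*(p:ℝ))) • a2}

/-- The piece `3(ℤ + (2s₂+s₁+3pδ)/(6p)) β₂ + (ℤ + (s₁−pδ)/(2p)) α₁`. -/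
def pieceB2 (p : ℕ) (s : Fin 2 → ℤ) (δ : ℤ) : Set (Fin 2 → ℝ) :=
  {x | ∃ a b : ℤ,
    x = (3 * ((a : ℝ) + (2*(s 1 : ℝ) + (s 0 : ℝ) + 3*(p:ℝ)*(δ:ℝ)) / (6*(p:ℝ)))) • b2 +
        ((b : ℝ) + ((s 0 : ℝ) - (p:ℝ)*(δ:ℝ)) / (2*(p:ℝ))) • a1}

set_option maxHeartbeats 2000000 in
/-- the decompositions of the shifted lattice `A₂ + μ₂(s)` along `β₁, α₂`
and along `β₂, α₁`, both unions being disjoint; and on the span of `α₁` or `α₂` the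
quadratic form `Q₂` restricts to the rank-one form `n ↦ n²`. -/
theorem statement13 (p : ℕ) (hp : 0 < p) (s : Fin 2 → ℤ) :
    cosetA2 p s = pieceB1 p s 0 ∪ pieceB1 p s 1 ∧
    Disjoint (pieceB1 p s 0) (pieceB1 p s 1) ∧
    cosetA2 p s = pieceB2 p s 0 ∪ pieceB2 p s 1 ∧
    Disjoint (pieceB2 p s 0) (pieceB2 p s 1) ∧
    (∀ c : ℝ, Q2 (c • a1) = c ^ 2 ∧ Q2 (c • a2) = c ^ 2) := by
  have hp' : (p : ℝ) ≠ 0 := Nat.cast_ne_zero.mpr hp.ne'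
  refine ⟨?_, ?_, ?_, ?_, ?_⟩
  · ext x
    constructor
    · rintro ⟨ν, rfl⟩
      rcases Int.even_or_odd (ν 0) with ⟨k, hk⟩ | ⟨k, hk⟩
      · left
        refine ⟨k, ν 1 - k, ?_⟩
        funext i
        fin_cases i <;>
          · simp only [Pi.add_apply, Pi.smul_apply, smul_eq_mul, mu2, b1, b2, a2, hk,
              Matrix.cons_val_zero, Matrix.cons_val_one, Matrix.head_cons,
              Fin.mk_zero, Fin.mk_one, Fin.isValue, Int.cast_zero, Int.cast_one]
            push_cast
            field_simp
            ring
      · right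
        refine ⟨k, ν 1 - k, ?_⟩
        funext i
        fin_cases i <;>
          · simp only [Pi.add_apply, Pi.smul_apply, smul_eq_mul, mu2, b1, b2, a2, hk,
              Matrix.cons_val_zero, Matrix.cons_val_one, Matrix.head_cons,
              Fin.mk_zero, Fin.mk_one, Fin.isValue, Int.cast_zero, Int.cast_one]
            push_cast
            field_simp
            ring
    · rintro (⟨a, b, rfl⟩ | ⟨a, b, rfl⟩)
      · refine ⟨![2*a, a+b], ?_⟩
        funext i
        fin_cases i <;>
          · simp only [Pi.add_apply, Pi.smul_apply, smul_eq_mul, mu2, b1, b2, a2,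
              Matrix.cons_val_zero, Matrix.cons_val_one, Matrix.head_cons,
              Fin.mk_zero, Fin.mk_one, Fin.isValue, Int.cast_zero, Int.cast_one]
            push_cast
            field_simp
            ring
      · refine ⟨![2*a+1, a+b], ?_⟩
        funext i
        fin_cases i <;>
          · simp only [Pi.add_apply, Pi.smul_apply, smul_eq_mul, mu2, b1, b2, a2,
              Matrix.cons_val_zero, Matrix.cons_val_one, Matrix.head_cons,
              Fin.mk_zero, Fin.mk_one, Fin.isValue, Int.cast_zero, Int.cast_one]
            push_cast
            field_simp
            ring
  · rw [Set.disjoint_left]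
    rintro x ⟨a, b, h0⟩ ⟨a', b', h1⟩
    have e := congrFun (h0.symm.trans h1) 0
    simp only [Pi.add_apply, Pi.smul_apply, smul_eq_mul, b1, a2,
      Matrix.cons_val_zero, Int.cast_zero, Int.cast_one, mul_zero, add_zero, mul_one] at e
    have h3 : (2 * (a:ℝ)) * (3 * p) = (2 * a' + 1) * (3 * p) := by field_simp at e; linarith
    have key := mul_right_cancel₀ (by positivity : (3*(p:ℝ)) ≠ 0) h3
    have : (2 * a : ℤ) = 2 * a' + 1 := by exact_mod_cast key
    omega
  · ext x
    constructor
    · rintro ⟨ν, rfl⟩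
      rcases Int.even_or_odd (ν 1) with ⟨k, hk⟩ | ⟨k, hk⟩
      · left
        refine ⟨k, ν 0 - k, ?_⟩
        funext i
        fin_cases i <;>
          · simp only [Pi.add_apply, Pi.smul_apply, smul_eq_mul, mu2, b1, b2, a1, hk,
              Matrix.cons_val_zero, Matrix.cons_val_one, Matrix.head_cons,
              Fin.mk_zero, Fin.mk_one, Fin.isValue, Int.cast_zero, Int.cast_one]
            push_cast
            field_simp
            ring
      · right
        refine ⟨k, ν 0 - k, ?_⟩
        funext i
        fin_cases i <;>
          · simp only [Pi.add_apply, Pi.smul_apply, smul_eq_mul, mu2, b1, b2, a1, hk,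
              Matrix.cons_val_zero, Matrix.cons_val_one, Matrix.head_cons,
              Fin.mk_zero, Fin.mk_one, Fin.isValue, Int.cast_zero, Int.cast_one]
            push_cast
            field_simp
            ring
    · rintro (⟨a, b, rfl⟩ | ⟨a, b, rfl⟩)
      · refine ⟨![a+b, 2*a], ?_⟩
        funext i
        fin_cases i <;>
          · simp only [Pi.add_apply, Pi.smul_apply, smul_eq_mul, mu2, b1, b2, a1,
              Matrix.cons_val_zero, Matrix.cons_val_one, Matrix.head_cons,
              Fin.mk_zero, Fin.mk_one, Fin.isValue, Int.cast_zero, Int.cast_one]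
            push_cast
            field_simp
            ring
      · refine ⟨![a+b, 2*a+1], ?_⟩
        funext i
        fin_cases i <;>
          · simp only [Pi.add_apply, Pi.smul_apply, smul_eq_mul, mu2, b1, b2, a1,
              Matrix.cons_val_zero, Matrix.cons_val_one, Matrix.head_cons,
              Fin.mk_zero, Fin.mk_one, Fin.isValue, Int.cast_zero, Int.cast_one]
            push_cast
            field_simp
            ring
  · rw [Set.disjoint_left]
    rintro x ⟨a, b, h0⟩ ⟨a', b', h1⟩
    have e := congrFun (h0.symm.trans h1) 1
    simp only [Pi.add_apply, Pi.smul_apply, smul_eq_mul, b2, a1,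
      Matrix.cons_val_one, Matrix.head_cons, Matrix.cons_val_zero, Int.cast_zero, Int.cast_one, mul_zero, add_zero, mul_one] at e
    have h3 : (2 * (a:ℝ)) * (3 * p) = (2 * a' + 1) * (3 * p) := by field_simp at e; linarith
    have key := mul_right_cancel₀ (by positivity : (3*(p:ℝ)) ≠ 0) h3
    have : (2 * a : ℤ) = 2 * a' + 1 := by exact_mod_cast key
    omega
  · intro c
    constructor <;>
      · simp only [Q2, a1, a2, Pi.smul_apply, smul_eq_mul,
          Matrix.cons_val_zero, Matrix.cons_val_one, Matrix.head_cons]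
        ring
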